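/- arXiv:2504.05431 — 3 statements merged into one kernel-verified Lean document; each statement's English description precedes it below -/
import Mathlib

section
/- Second moment of the hyperbolic secant-type bound: for h(t) = −log(2cosh(√t/2)), the second derivative satisfies 0 < h''(t) ≤ 1/96 for all t > 0. In particular h''(t) ≤ 1 for all t > 0. -/
open Real Set

/-- auxiliary: sinh x ≤ x cosh x for x ≥ 0 -/
lemma aux_sinh_le_mul_cosh {x : ℝ} (hx : 0 ≤ x) : Real.sinh x ≤ x * Real.cosh x := by
  set G : ℝ → ℝ := fun y => y * Real.cosh y - Real.sinh y with hG
  have hd : ∀ y : ℝ, HasDerivAt G (y * Real.sinh y) y := by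
    intro y
    have : HasDerivAt G (1 * Real.cosh y + y * Real.sinh y - Real.cosh y) y :=
      ((hasDerivAt_id y).mul (Real.hasDerivAt_cosh y)).sub (Real.hasDerivAt_sinh y)
    simpa using this
  have hmono : MonotoneOn G (Ici (0:ℝ)) := by
    apply monotoneOn_of_deriv_nonneg (convex_Ici 0)
    · exact fun y _ => (hd y).continuousAt.continuousWithinAt
    · exact fun y _ => (hd y).differentiableAt.differentiableWithinAt
    · intro y hy
      rw [interior_Ici, mem_Ioi] at hy
      rw [(hd y).deriv]
      positivity
  have h0 : G 0 ≤ G x := hmono (by simp) hx hx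
  simp only [hG, Real.cosh_zero, Real.sinh_zero, mul_one, zero_mul, sub_zero, sub_self] at h0
  linarith [h0]

/-- auxiliary: sinh x cosh x − x ≤ (2/3) x³ cosh² x for x ≥ 0 -/
lemma aux_key {x : ℝ} (hx : 0 ≤ x) :
    Real.sinh x * Real.cosh x - x ≤ 2/3 * x^3 * Real.cosh x ^ 2 := by
  set F : ℝ → ℝ := fun y => 2/3 * y^3 * Real.cosh y ^ 2 - Real.sinh y * Real.cosh y + y with hF
  have hd : ∀ y : ℝ, HasDerivAt F
      (2 * y^2 * Real.cosh y ^ 2 + 4/3 * y^3 * Real.sinh y * Real.cosh y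
        - (Real.cosh y ^ 2 + Real.sinh y ^ 2) + 1) y := by
    intro y
    have h1 : HasDerivAt (fun y : ℝ => 2/3 * y^3) (2/3 * (3 * y^2)) y := by
      simpa using (hasDerivAt_pow 3 y).const_mul (2/3 : ℝ)
    have h2 : HasDerivAt (fun y : ℝ => Real.cosh y ^ 2) (2 * Real.cosh y ^ 1 * Real.sinh y) y :=
      (Real.hasDerivAt_cosh y).pow 2
    have h3 : HasDerivAt (fun y : ℝ => Real.sinh y * Real.cosh y)
        (Real.cosh y * Real.cosh y + Real.sinh y * Real.sinh y) y :=
      (Real.hasDerivAt_sinh y).mul (Real.hasDerivAt_cosh y)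
    have := ((h1.mul h2).sub h3).add (hasDerivAt_id y)
    refine this.congr_deriv ?_
    ring
  have hmono : MonotoneOn F (Ici (0:ℝ)) := by
    apply monotoneOn_of_deriv_nonneg (convex_Ici 0)
    · exact fun y _ => (hd y).continuousAt.continuousWithinAt
    · exact fun y _ => (hd y).differentiableAt.differentiableWithinAt
    · intro y hy
      rw [interior_Ici, mem_Ioi] at hy
      rw [(hd y).deriv]
      have hs : Real.sinh y ≤ y * Real.cosh y := aux_sinh_le_mul_cosh hy.le
      have hs0 : 0 ≤ Real.sinh y := Real.sinh_nonneg_iff.mpr hy.le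
      have hsq : Real.sinh y ^ 2 ≤ y^2 * Real.cosh y ^ 2 := by nlinarith
      have hc1 : (1:ℝ) ≤ Real.cosh y := Real.one_le_cosh y
      have : Real.cosh y ^ 2 = 1 + Real.sinh y ^ 2 := by
        have := Real.cosh_sq_sub_sinh_sq y; nlinarith
      nlinarith [mul_nonneg (mul_nonneg (by positivity : (0:ℝ) ≤ 4/3 * y^3) hs0)
        (Real.cosh_pos y).le]
  have h0 : F 0 ≤ F x := hmono (by simp) hx hx
  simp only [hF, Real.cosh_zero, Real.sinh_zero] at h0
  norm_num at h0
  linarith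

/-- first derivative -/
lemma aux_hasDerivAt_h {t : ℝ} (ht : 0 < t) :
    HasDerivAt (fun u : ℝ => -Real.log (2 * Real.cosh (Real.sqrt u / 2)))
      (-(Real.sinh (Real.sqrt t / 2) / (Real.cosh (Real.sqrt t / 2) * (4 * Real.sqrt t)))) t := by
  have hst : 0 < Real.sqrt t := Real.sqrt_pos.mpr ht
  have h1 : HasDerivAt (fun u : ℝ => Real.sqrt u / 2) (1 / (2 * Real.sqrt t) / 2) t :=
    (Real.hasDerivAt_sqrt ht.ne').div_const 2
  have h2 : HasDerivAt (fun u : ℝ => Real.cosh (Real.sqrt u / 2))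
      (Real.sinh (Real.sqrt t / 2) * (1 / (2 * Real.sqrt t) / 2)) t :=
    (Real.hasDerivAt_cosh _).comp t h1
  have h3 : HasDerivAt (fun u : ℝ => 2 * Real.cosh (Real.sqrt u / 2))
      (2 * (Real.sinh (Real.sqrt t / 2) * (1 / (2 * Real.sqrt t) / 2))) t := h2.const_mul 2
  have hpos : 2 * Real.cosh (Real.sqrt t / 2) ≠ 0 := by
    have := Real.cosh_pos (Real.sqrt t / 2); positivity
  have h4 := (h3.log hpos).neg
  refine h4.congr_deriv ?_
  have hc := (Real.cosh_pos (Real.sqrt t / 2)).ne'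
  field_simp
  ring

/-- second derivative -/
lemma aux_hasDerivAt_g {t : ℝ} (ht : 0 < t) :
    HasDerivAt (fun u : ℝ =>
        -(Real.sinh (Real.sqrt u / 2) / (Real.cosh (Real.sqrt u / 2) * (4 * Real.sqrt u))))
      ((Real.sinh (Real.sqrt t / 2) * Real.cosh (Real.sqrt t / 2) - Real.sqrt t / 2) /
        (Real.cosh (Real.sqrt t / 2) ^ 2 * (8 * Real.sqrt t ^ 3))) t := by
  have hst : 0 < Real.sqrt t := Real.sqrt_pos.mpr ht
  have hc := Real.cosh_pos (Real.sqrt t / 2)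
  have h1 : HasDerivAt (fun u : ℝ => Real.sqrt u / 2) (1 / (2 * Real.sqrt t) / 2) t :=
    (Real.hasDerivAt_sqrt ht.ne').div_const 2
  have hsinh : HasDerivAt (fun u : ℝ => Real.sinh (Real.sqrt u / 2))
      (Real.cosh (Real.sqrt t / 2) * (1 / (2 * Real.sqrt t) / 2)) t :=
    (Real.hasDerivAt_sinh _).comp t h1
  have hcosh : HasDerivAt (fun u : ℝ => Real.cosh (Real.sqrt u / 2))
      (Real.sinh (Real.sqrt t / 2) * (1 / (2 * Real.sqrt t) / 2)) t :=
    (Real.hasDerivAt_cosh _).comp t h1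
  have hsq : HasDerivAt (fun u : ℝ => 4 * Real.sqrt u) (4 * (1 / (2 * Real.sqrt t))) t :=
    (Real.hasDerivAt_sqrt ht.ne').const_mul 4
  have hden : HasDerivAt (fun u : ℝ => Real.cosh (Real.sqrt u / 2) * (4 * Real.sqrt u))
      (Real.sinh (Real.sqrt t / 2) * (1 / (2 * Real.sqrt t) / 2) * (4 * Real.sqrt t)
        + Real.cosh (Real.sqrt t / 2) * (4 * (1 / (2 * Real.sqrt t)))) t := hcosh.mul hsq
  have hden0 : Real.cosh (Real.sqrt t / 2) * (4 * Real.sqrt t) ≠ 0 := by positivity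
  have h5 := (hsinh.div hden hden0).neg
  refine h5.congr_deriv ?_
  have hid := Real.cosh_sq_sub_sinh_sq (Real.sqrt t / 2)
  field_simp
  linear_combination (-8 * Real.sqrt t) * hid

/-- For `h(t) = -log(2cosh(√t/2))` the second derivative satisfies
`0 < h''(t) ≤ 1/96` for all `t > 0`; in particular `h''(t) ≤ 1`. -/
theorem typeII_ssg_second_deriv_bound :
    ∀ t : ℝ, 0 < t →
      0 < deriv (deriv (fun u : ℝ => -Real.log (2 * Real.cosh (Real.sqrt u / 2)))) t ∧
      deriv (deriv (fun u : ℝ => -Real.log (2 * Real.cosh (Real.sqrt u / 2)))) t ≤ 1 / 96 ∧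
      deriv (deriv (fun u : ℝ => -Real.log (2 * Real.cosh (Real.sqrt u / 2)))) t ≤ 1 := by
  intro t ht
  have hst : 0 < Real.sqrt t := Real.sqrt_pos.mpr ht
  have hEq : deriv (fun u : ℝ => -Real.log (2 * Real.cosh (Real.sqrt u / 2))) =ᶠ[nhds t]
      (fun u : ℝ =>
        -(Real.sinh (Real.sqrt u / 2) / (Real.cosh (Real.sqrt u / 2) * (4 * Real.sqrt u)))) := by
    filter_upwards [Ioi_mem_nhds ht] with u hu
    exact (aux_hasDerivAt_h hu).deriv
  have hD : deriv (deriv (fun u : ℝ => -Real.log (2 * Real.cosh (Real.sqrt u / 2)))) t =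
      (Real.sinh (Real.sqrt t / 2) * Real.cosh (Real.sqrt t / 2) - Real.sqrt t / 2) /
        (Real.cosh (Real.sqrt t / 2) ^ 2 * (8 * Real.sqrt t ^ 3)) := by
    rw [hEq.deriv_eq]
    exact (aux_hasDerivAt_g ht).deriv
  rw [hD]
  set x := Real.sqrt t / 2 with hx
  have hx0 : 0 < x := by positivity
  have hc := Real.cosh_pos x
  have hden : 0 < Real.cosh x ^ 2 * (8 * Real.sqrt t ^ 3) := by positivity
  have hnum : 0 < Real.sinh x * Real.cosh x - x := by
    have h1 : x < Real.sinh x := Real.self_lt_sinh_iff.mpr hx0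
    have h2 : Real.sinh x ≤ Real.sinh x * Real.cosh x := by
      nlinarith [Real.one_le_cosh x, h1]
    linarith
  have hs2x : Real.sqrt t = 2 * x := by rw [hx]; ring
  have hle : (Real.sinh x * Real.cosh x - x) /
      (Real.cosh x ^ 2 * (8 * Real.sqrt t ^ 3)) ≤ 1 / 96 := by
    rw [div_le_iff₀ hden]
    have := aux_key hx0.le
    rw [hs2x]
    nlinarith [this]
  refine ⟨div_pos hnum hden, hle, hle.trans (by norm_num)⟩
end

section
/- Prior concentration for a multivariate Gaussian: let β ∼ N_p(μ, Σ) with Σ positive definite, let β₀ ∈ ℝ^p and c > 0. Then P(‖β − β₀‖₂ ≤ c) ≥ (2^{−p/2}/Γ(p/2+1)) · (c/√λ_max(Σ))^p · exp(−(Δ² + c²/λ_max(Σ))/2), where Δ² = ‖Σ^{−1/2}(β₀ − μ)‖₂² and λ_max(Σ) is the largest eigenvalue of Σ. -/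
open MeasureTheory Matrix
set_option maxHeartbeats 1000000

lemma psd_det_nonneg' {n : Type*} [Fintype n] [DecidableEq n] {M : Matrix n n ℝ}
    (hM : M.PosSemidef) : 0 ≤ M.det := by
  rw [hM.1.det_eq_prod_eigenvalues]
  exact Finset.prod_nonneg fun i _ => hM.eigenvalues_nonneg i

lemma quad_inv_repr {p : ℕ} {S : Matrix (Fin p) (Fin p) ℝ} (hS : S.PosDef) (u : Fin p → ℝ) :
    (u ⬝ᵥ u = ∑ i, ((star (hS.isHermitian.eigenvectorUnitary : Matrix (Fin p) (Fin p) ℝ) *ᵥ u) i)^2) ∧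
    (u ⬝ᵥ S⁻¹ *ᵥ u = ∑ i, (hS.isHermitian.eigenvalues i)⁻¹ *
      ((star (hS.isHermitian.eigenvectorUnitary : Matrix (Fin p) (Fin p) ℝ) *ᵥ u) i)^2) := by
  set h := hS.isHermitian
  set U : Matrix (Fin p) (Fin p) ℝ := (h.eigenvectorUnitary : Matrix (Fin p) (Fin p) ℝ)
  have hU : U ∈ Matrix.unitaryGroup (Fin p) ℝ := h.eigenvectorUnitary.2
  have hUU : U * star U = 1 := Matrix.mem_unitaryGroup_iff.mp hU
  have hUU' : star U * U = 1 := Matrix.mem_unitaryGroup_iff'.mp hU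
  have hofReal : (RCLike.ofReal ∘ h.eigenvalues : Fin p → ℝ) = h.eigenvalues := rfl
  have hspec : S = U * diagonal h.eigenvalues * star U := by
    have := h.spectral_theorem
    rwa [hofReal] at this
  have hSinv : S⁻¹ = U * diagonal (fun i => (h.eigenvalues i)⁻¹) * star U := by
    apply Matrix.inv_eq_right_inv
    calc S * (U * diagonal (fun i => (h.eigenvalues i)⁻¹) * star U)
        = U * diagonal h.eigenvalues * star U * (U * diagonal (fun i => (h.eigenvalues i)⁻¹) * star U) := by
          rw [← hspec]
      _ = U * (diagonal h.eigenvalues * (star U * U) * diagonal (fun i => (h.eigenvalues i)⁻¹)) * star U := by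
          ring_nf; noncomm_ring
      _ = 1 := by
          rw [hUU', mul_one, diagonal_mul_diagonal]
          have : (fun i => h.eigenvalues i * (h.eigenvalues i)⁻¹) = fun _ => (1:ℝ) := by
            funext i; exact mul_inv_cancel₀ (hS.eigenvalues_pos i).ne'
          rw [this, diagonal_one, mul_one, hUU]
  set w : Fin p → ℝ := star U *ᵥ u with hw
  have hdotU : ∀ z : Fin p → ℝ, u ⬝ᵥ (U *ᵥ z) = w ⬝ᵥ z := by
    intro z
    rw [Matrix.dotProduct_mulVec, hw]
    congr 1
    rw [← Matrix.mulVec_transpose, Matrix.star_eq_conjTranspose,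
      Matrix.conjTranspose_eq_transpose_of_trivial]
  constructor
  · have : u ⬝ᵥ u = u ⬝ᵥ ((U * star U) *ᵥ u) := by rw [hUU, Matrix.one_mulVec]
    rw [this, ← Matrix.mulVec_mulVec, hdotU]
    simp [dotProduct, pow_two]
    rfl
  · rw [hSinv, ← Matrix.mulVec_mulVec, ← Matrix.mulVec_mulVec, hdotU]
    simp only [dotProduct, Matrix.mulVec_diagonal]
    exact Finset.sum_congr rfl fun i _ => by ring

lemma dot_le_mul_quad_inv {p : ℕ} {S : Matrix (Fin p) (Fin p) ℝ} (hS : S.PosDef) {L : ℝ}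
    (hLub : ∀ i, hS.isHermitian.eigenvalues i ≤ L) (u : Fin p → ℝ) :
    u ⬝ᵥ u ≤ L * (u ⬝ᵥ S⁻¹ *ᵥ u) := by
  obtain ⟨h1, h2⟩ := quad_inv_repr hS u
  rw [h1, h2, Finset.mul_sum]
  refine Finset.sum_le_sum fun i _ => ?_
  set wi := (star (hS.isHermitian.eigenvectorUnitary : Matrix (Fin p) (Fin p) ℝ) *ᵥ u) i
  have hpos := hS.eigenvalues_pos i
  have hinv : (hS.isHermitian.eigenvalues i)⁻¹ * hS.isHermitian.eigenvalues i = 1 :=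
    inv_mul_cancel₀ hpos.ne'
  have hinvpos : 0 < (hS.isHermitian.eigenvalues i)⁻¹ := inv_pos.mpr hpos
  nlinarith [sq_nonneg wi, hLub i, mul_le_mul_of_nonneg_left (hLub i) hinvpos.le]

lemma vol_ball_pi {p : ℕ} [Nonempty (Fin p)] (w₀ : Fin p → ℝ) {r : ℝ} (hr : 0 ≤ r) :
    volume {z : Fin p → ℝ | (z - w₀) ⬝ᵥ (z - w₀) ≤ r ^ 2}
      = ENNReal.ofReal r ^ p *
        ENNReal.ofReal (Real.sqrt Real.pi ^ p / Real.Gamma ((p : ℝ) / 2 + 1)) := by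
  set D : Set (Fin p → ℝ) := {z | (z - w₀) ⬝ᵥ (z - w₀) ≤ r ^ 2} with hD
  set eqv := (MeasurableEquiv.toLp 2 (Fin p → ℝ)).symm
  have hDmeas : MeasurableSet D := by
    have : Continuous fun z : Fin p → ℝ => (z - w₀) ⬝ᵥ (z - w₀) := by
      unfold dotProduct
      exact continuous_finset_sum _ fun i _ => by fun_prop
    exact isClosed_le this continuous_const |>.measurableSet
  have hpre : (⇑eqv) ⁻¹' D = Metric.closedBall (eqv.symm w₀) r := by
    ext y
    simp only [Set.mem_preimage, hD, Set.mem_setOf_eq, Metric.mem_closedBall]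
    have hdist : dist y (eqv.symm w₀) = Real.sqrt (∑ i, (y i - w₀ i) ^ 2) := by
      rw [EuclideanSpace.dist_eq]
      congr 1
      refine Finset.sum_congr rfl fun i _ => ?_
      rw [Real.dist_eq, sq_abs]
      rfl
    have hsum : (eqv y - w₀) ⬝ᵥ (eqv y - w₀) = ∑ i, (y i - w₀ i) ^ 2 := by
      unfold dotProduct
      refine Finset.sum_congr rfl fun i _ => ?_
      have : (eqv y - w₀) i = y i - w₀ i := rfl
      rw [this, pow_two]
    rw [hdist, hsum]
    constructor
    · intro h
      calc Real.sqrt (∑ i, (y i - w₀ i) ^ 2) ≤ Real.sqrt (r ^ 2) := Real.sqrt_le_sqrt h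
        _ = r := Real.sqrt_sq hr
    · intro h
      have h0 : 0 ≤ ∑ i, (y i - w₀ i) ^ 2 := Finset.sum_nonneg fun i _ => sq_nonneg _
      calc ∑ i, (y i - w₀ i) ^ 2 = Real.sqrt (∑ i, (y i - w₀ i) ^ 2) ^ 2 := (Real.sq_sqrt h0).symm
        _ ≤ r ^ 2 := by exact pow_le_pow_left₀ (Real.sqrt_nonneg _) h 2
  have := (EuclideanSpace.volume_preserving_symm_measurableEquiv_toLp (Fin p)).measure_preimage
    hDmeas.nullMeasurableSet
  rw [hpre] at this
  rw [← this, EuclideanSpace.volume_closedBall, Fintype.card_fin]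

open scoped MatrixOrder in
lemma vol_ellipsoid {p : ℕ} [Nonempty (Fin p)] {A : Matrix (Fin p) (Fin p) ℝ} (hA : A.PosDef)
    (β₀ : Fin p → ℝ) {r : ℝ} (hr : 0 ≤ r) :
    (volume {x : Fin p → ℝ | (x - β₀) ⬝ᵥ A *ᵥ (x - β₀) ≤ r ^ 2}).toReal
      = (Real.sqrt A.det)⁻¹ * (r ^ p * (Real.sqrt Real.pi ^ p / Real.Gamma ((p : ℝ) / 2 + 1))) := by
  have hR := hA.posSemidef
  set R : Matrix (Fin p) (Fin p) ℝ := CFC.sqrt A with hRdef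
  have hRR : R * R = A := CFC.sqrt_mul_sqrt_self A hR.nonneg
  have hRsym : Rᵀ = R := by
    rw [← Matrix.conjTranspose_eq_transpose_of_trivial]
    exact (CFC.sqrt_nonneg A).posSemidef.1
  have hdetA : 0 < A.det := hA.det_pos
  have hdetR_nonneg : 0 ≤ R.det := psd_det_nonneg' (CFC.sqrt_nonneg A).posSemidef
  have hdetRR : R.det * R.det = A.det := by rw [← Matrix.det_mul, hRR]
  have hdetR_ne : R.det ≠ 0 := by
    intro h0
    rw [h0, mul_zero] at hdetRR
    exact hdetA.ne' hdetRR.symm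
  have hdetR : Real.sqrt A.det = R.det := by rw [← hdetRR, Real.sqrt_mul_self hdetR_nonneg]
  have hquad : ∀ v : Fin p → ℝ, v ⬝ᵥ A *ᵥ v = (R *ᵥ v) ⬝ᵥ (R *ᵥ v) := by
    intro v
    rw [← hRR, ← Matrix.mulVec_mulVec, Matrix.dotProduct_mulVec, ← Matrix.mulVec_transpose, hRsym]
  have hset : {x : Fin p → ℝ | (x - β₀) ⬝ᵥ A *ᵥ (x - β₀) ≤ r ^ 2}
      = (Matrix.toLin' R) ⁻¹' {z : Fin p → ℝ | (z - R *ᵥ β₀) ⬝ᵥ (z - R *ᵥ β₀) ≤ r ^ 2} := by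
    ext x
    simp only [Set.mem_setOf_eq, Set.mem_preimage, Matrix.toLin'_apply]
    rw [hquad, ← Matrix.mulVec_sub]
  have hdetlin : LinearMap.det (Matrix.toLin' R) = R.det := LinearMap.det_toLin' R
  rw [hset, MeasureTheory.Measure.addHaar_preimage_linearMap volume
      (by rw [hdetlin]; exact hdetR_ne), vol_ball_pi _ hr, hdetlin]
  rw [ENNReal.toReal_mul, ENNReal.toReal_mul, ENNReal.toReal_pow, ENNReal.toReal_ofReal,
    ENNReal.toReal_ofReal hr, ENNReal.toReal_ofReal, hdetR]
  · rw [abs_of_nonneg (inv_nonneg.mpr hdetR_nonneg)]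
  · have := Real.Gamma_pos_of_pos (show (0:ℝ) < (p:ℝ)/2 + 1 by positivity)
    positivity
  · exact abs_nonneg _

/-- Prior concentration for a multivariate Gaussian `N_p(μ, Σ)` with `Σ` positive
definite: writing `L = λ_max(Σ)` and `Δ² = (β₀-μ)ᵀ Σ⁻¹ (β₀-μ)`,
`P(‖β - β₀‖₂ ≤ c) ≥ (2^{-p/2}/Γ(p/2+1))·(c/√L)^p·exp(-(Δ² + c²/L)/2)`. -/
theorem gaussian_prior_concentration (p : ℕ)
    (μv β₀ : Fin p → ℝ) (S : Matrix (Fin p) (Fin p) ℝ) (hS : S.PosDef)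
    (c : ℝ) (hc : 0 < c) (L : ℝ)
    (hL : IsGreatest {l : ℝ | ∃ i, hS.isHermitian.eigenvalues i = l} L) :
    (2 : ℝ) ^ (-(p : ℝ) / 2) / Real.Gamma ((p : ℝ) / 2 + 1) *
        (c / Real.sqrt L) ^ p *
        Real.exp (-((β₀ - μv) ⬝ᵥ (S⁻¹ *ᵥ (β₀ - μv)) + c ^ 2 / L) / 2) ≤
      ∫ x in {x : Fin p → ℝ | Real.sqrt (∑ i, (x i - β₀ i) ^ 2) ≤ c},
        (Real.sqrt ((2 * Real.pi) ^ p * S.det))⁻¹ *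
          Real.exp (-((x - μv) ⬝ᵥ (S⁻¹ *ᵥ (x - μv))) / 2) := by
  classical
  obtain ⟨⟨i0, hi0⟩, hub⟩ := hL
  haveI : Nonempty (Fin p) := ⟨i0⟩
  have hL0 : 0 < L := hi0 ▸ hS.eigenvalues_pos i0
  have hLub : ∀ i, hS.isHermitian.eigenvalues i ≤ L := fun i => hub ⟨i, rfl⟩
  have hdetS : 0 < S.det := hS.det_pos
  have hA : (S⁻¹).PosDef := hS.inv
  set N : ℝ := Real.sqrt ((2 * Real.pi) ^ p * S.det) with hN_def
  have hN0 : 0 < N := Real.sqrt_pos.mpr (by positivity)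
  set Q : (Fin p → ℝ) → ℝ := fun v => v ⬝ᵥ S⁻¹ *ᵥ v with hQ_def
  have hQcont : Continuous Q := by
    rw [hQ_def]
    unfold dotProduct Matrix.mulVec dotProduct
    exact continuous_finset_sum _ fun i _ => by fun_prop
  have hQnonneg : ∀ v, 0 ≤ Q v := by
    intro v
    have := hA.posSemidef.dotProduct_mulVec_nonneg v
    simpa [hQ_def] using this
  have hQneg : ∀ v, Q (-v) = Q v := by
    intro v
    simp [hQ_def, Matrix.mulVec_neg]
  have hQsym : ∀ v w, v ⬝ᵥ S⁻¹ *ᵥ w = w ⬝ᵥ S⁻¹ *ᵥ v := by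
    intro v w
    have hAt : (S⁻¹)ᵀ = S⁻¹ := by
      rw [← Matrix.conjTranspose_eq_transpose_of_trivial]
      exact hA.isHermitian
    rw [Matrix.dotProduct_mulVec, ← Matrix.mulVec_transpose, hAt, dotProduct_comm]
  set r : ℝ := c / Real.sqrt L with hr_def
  have hsqrtL : 0 < Real.sqrt L := Real.sqrt_pos.mpr hL0
  have hr0 : 0 < r := div_pos hc hsqrtL
  have hr2 : r ^ 2 = c ^ 2 / L := by
    rw [hr_def, div_pow, Real.sq_sqrt hL0.le]
  set f : (Fin p → ℝ) → ℝ := fun x =>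
    (Real.sqrt ((2 * Real.pi) ^ p * S.det))⁻¹ *
      Real.exp (-((x - μv) ⬝ᵥ (S⁻¹ *ᵥ (x - μv))) / 2) with hf_def
  have hf_eq : ∀ x, f x = N⁻¹ * Real.exp (-(Q (x - μv)) / 2) := fun x => rfl
  have hfcont : Continuous f := by
    rw [hf_def]
    have h1 : Continuous fun x : Fin p → ℝ => Q (x - μv) := hQcont.comp (by fun_prop)
    exact continuous_const.mul (Real.continuous_exp.comp ((h1.neg).div_const 2))
  have hfnn : ∀ x, 0 ≤ f x := fun x => by
    rw [hf_eq]
    positivity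
  set E : Set (Fin p → ℝ) := {x | (x - β₀) ⬝ᵥ S⁻¹ *ᵥ (x - β₀) ≤ r ^ 2} with hE_def
  set ballC : Set (Fin p → ℝ) := {x | Real.sqrt (∑ i, (x i - β₀ i) ^ 2) ≤ c} with hball_def
  have hEmem : ∀ x, x ∈ E ↔ Q (x - β₀) ≤ r ^ 2 := fun x => Iff.rfl
  have hEsub : E ⊆ ballC := by
    intro x hx
    rw [hEmem] at hx
    have h1 : (x - β₀) ⬝ᵥ (x - β₀) ≤ L * Q (x - β₀) := dot_le_mul_quad_inv hS hLub _
    have h2 : L * Q (x - β₀) ≤ L * (r ^ 2) := mul_le_mul_of_nonneg_left hx hL0.le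
    have h3 : L * r ^ 2 = c ^ 2 := by
      rw [hr2]; field_simp
    have h4 : ∑ i, (x i - β₀ i) ^ 2 = (x - β₀) ⬝ᵥ (x - β₀) := by
      unfold dotProduct
      exact Finset.sum_congr rfl fun i _ => by simp [pow_two]
    show Real.sqrt (∑ i, (x i - β₀ i) ^ 2) ≤ c
    rw [h4]
    calc Real.sqrt ((x - β₀) ⬝ᵥ (x - β₀)) ≤ Real.sqrt (c ^ 2) := by
          apply Real.sqrt_le_sqrt; linarith
      _ = c := Real.sqrt_sq hc.le
  have hballClosed : IsClosed ballC := by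
    have : Continuous fun x : Fin p → ℝ => Real.sqrt (∑ i, (x i - β₀ i) ^ 2) := by fun_prop
    exact isClosed_le this continuous_const
  have hballBounded : Bornology.IsBounded ballC := by
    apply (Metric.isBounded_closedBall (x := β₀) (r := c)).subset
    intro x hx
    rw [Metric.mem_closedBall]
    rw [hball_def, Set.mem_setOf_eq] at hx
    have hsumnn : (0:ℝ) ≤ ∑ i, (x i - β₀ i) ^ 2 := Finset.sum_nonneg fun i _ => sq_nonneg _
    rw [dist_pi_le_iff hc.le]
    intro i
    rw [Real.dist_eq, ← Real.sqrt_sq_eq_abs]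
    calc Real.sqrt ((x i - β₀ i) ^ 2) ≤ Real.sqrt (∑ j, (x j - β₀ j) ^ 2) := by
          apply Real.sqrt_le_sqrt
          exact Finset.single_le_sum (f := fun j => (x j - β₀ j) ^ 2)
            (fun j _ => sq_nonneg _) (Finset.mem_univ i)
      _ ≤ c := hx
  have hballCompact : IsCompact ballC :=
    Metric.isCompact_of_isClosed_isBounded hballClosed hballBounded
  have hEclosed : IsClosed E := by
    have : Continuous fun x : Fin p → ℝ => Q (x - β₀) := hQcont.comp (by fun_prop)
    exact isClosed_le this continuous_const
  have hEcompact : IsCompact E := hballCompact.of_isClosed_subset hEclosed hEsub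
  have hEmeas : MeasurableSet E := hEclosed.measurableSet
  have hEfin : volume E ≠ ⊤ := hEcompact.measure_lt_top.ne
  have hfint : IntegrableOn f ballC :=
    ContinuousOn.integrableOn_compact hballCompact hfcont.continuousOn
  have hfintE : IntegrableOn f E :=
    ContinuousOn.integrableOn_compact hEcompact hfcont.continuousOn
  set b : Fin p → ℝ := β₀ + β₀ with hb_def
  have hgcont : Continuous fun x : Fin p → ℝ => f (b - x) := hfcont.comp (by fun_prop)
  have hgintE : IntegrableOn (fun x => f (b - x)) E :=
    ContinuousOn.integrableOn_compact hEcompact hgcont.continuousOn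
  have hmp : MeasurePreserving (fun x : Fin p → ℝ => b - x) volume volume :=
    ⟨measurable_const.sub measurable_id, Measure.map_sub_left_eq_self volume b⟩
  have hemb : MeasurableEmbedding (fun x : Fin p → ℝ => b - x) :=
    (MeasurableEquiv.subLeft b).measurableEmbedding
  have hpre : (fun x : Fin p → ℝ => b - x) ⁻¹' E = E := by
    ext x
    simp only [Set.mem_preimage, hE_def, Set.mem_setOf_eq]
    have hxx : b - x - β₀ = -(x - β₀) := by rw [hb_def]; abel
    rw [hxx, Matrix.mulVec_neg, dotProduct_neg, neg_dotProduct, neg_neg]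
  have hrefl : ∫ x in E, f (b - x) = ∫ y in E, f y := by
    have h := hmp.setIntegral_preimage_emb hemb f E
    rwa [hpre] at h
  set d : Fin p → ℝ := β₀ - μv with hd_def
  have expand : ∀ z w : Fin p → ℝ, (z + w) ⬝ᵥ S⁻¹ *ᵥ (z + w)
      = z ⬝ᵥ S⁻¹ *ᵥ z + w ⬝ᵥ S⁻¹ *ᵥ w + 2 * (z ⬝ᵥ S⁻¹ *ᵥ w) := by
    intro z w
    rw [Matrix.mulVec_add, add_dotProduct, dotProduct_add, dotProduct_add, hQsym w z]
    ring
  have hpt : ∀ x ∈ E, N⁻¹ * Real.exp (-(Q d + c ^ 2 / L) / 2) ≤ (f x + f (b - x)) / 2 := by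
    intro x hx
    have hQuE : Q (x - β₀) ≤ c ^ 2 / L := by rw [← hr2]; exact hx
    set u : Fin p → ℝ := x - β₀ with hu_def
    set B : ℝ := u ⬝ᵥ S⁻¹ *ᵥ d with hB_def
    have hu : x - μv = u + d := by rw [hu_def, hd_def]; abel
    have hv : b - x - μv = d - u := by rw [hb_def, hu_def, hd_def]; abel
    have hQp : Q (u + d) = Q u + Q d + 2 * B := by
      rw [hQ_def]; exact expand u d
    have hQm : Q (d - u) = Q u + Q d - 2 * B := by
      have : d - u = d + -u := by abel
      rw [hQ_def]
      simp only [this]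
      rw [expand d (-u)]
      have h1 : (-u) ⬝ᵥ S⁻¹ *ᵥ (-u) = u ⬝ᵥ S⁻¹ *ᵥ u := by
        simp [Matrix.mulVec_neg]
      have h2 : d ⬝ᵥ S⁻¹ *ᵥ (-u) = -(u ⬝ᵥ S⁻¹ *ᵥ d) := by
        rw [Matrix.mulVec_neg, dotProduct_neg, hQsym d u]
      rw [h1, h2, hB_def]
      ring
    have e1 : Real.exp (-(Q u + Q d + 2 * B) / 2)
        = Real.exp (-(Q u + Q d) / 2) * Real.exp (-B) := by
      rw [← Real.exp_add]; ring_nf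
    have e2 : Real.exp (-(Q u + Q d - 2 * B) / 2)
        = Real.exp (-(Q u + Q d) / 2) * Real.exp B := by
      rw [← Real.exp_add]; ring_nf
    have e3 : 2 ≤ Real.exp (-B) + Real.exp B := by
      have m1 : Real.exp (-B / 2) * Real.exp (B / 2) = 1 := by
        have hz : (-B / 2 + B / 2 : ℝ) = 0 := by ring
        rw [← Real.exp_add, hz, Real.exp_zero]
      have m2 : Real.exp (-B / 2) * Real.exp (-B / 2) = Real.exp (-B) := by
        rw [← Real.exp_add]; ring_nf
      have m3 : Real.exp (B / 2) * Real.exp (B / 2) = Real.exp B := by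
        rw [← Real.exp_add]; ring_nf
      nlinarith [sq_nonneg (Real.exp (-B / 2) - Real.exp (B / 2)), Real.exp_pos (-B / 2),
        Real.exp_pos (B / 2)]
    have key2 : 2 * Real.exp (-(Q u + Q d) / 2)
        ≤ Real.exp (-(Q (u + d)) / 2) + Real.exp (-(Q (d - u)) / 2) := by
      rw [hQp, hQm, e1, e2]
      nlinarith [Real.exp_pos (-(Q u + Q d) / 2)]
    have hmono : Real.exp (-(Q d + c ^ 2 / L) / 2) ≤ Real.exp (-(Q u + Q d) / 2) := by
      apply Real.exp_le_exp.mpr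
      have : Q u ≤ c ^ 2 / L := hQuE
      linarith
    calc N⁻¹ * Real.exp (-(Q d + c ^ 2 / L) / 2)
        ≤ N⁻¹ * Real.exp (-(Q u + Q d) / 2) :=
          mul_le_mul_of_nonneg_left hmono (inv_nonneg.mpr hN0.le)
      _ ≤ (f x + f (b - x)) / 2 := by
          rw [hf_eq, hf_eq, hu, hv]
          have := mul_le_mul_of_nonneg_left key2 (inv_nonneg.mpr hN0.le)
          linarith
  have step1 : (N⁻¹ * Real.exp (-(Q d + c ^ 2 / L) / 2)) * (volume E).toReal
      ≤ ∫ x in E, (f x + f (b - x)) / 2 :=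
    by have := setIntegral_ge_of_const_le_real hEmeas hEfin hpt ((hfintE.add hgintE).div_const 2)
       rw [measureReal_def] at this; linarith
  have step2 : ∫ x in E, (f x + f (b - x)) / 2 = ∫ x in E, f x := by
    have h1 : ∫ x in E, (f x + f (b - x)) / 2
        = (∫ x in E, (f x + f (b - x))) / 2 := integral_div 2 _
    have h2 : ∫ x in E, (f x + f (b - x)) = (∫ x in E, f x) + ∫ x in E, f (b - x) :=
      integral_add hfintE hgintE
    rw [h1, h2, hrefl]
    ring
  have step3 : ∫ x in E, f x ≤ ∫ x in ballC, f x :=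
    setIntegral_mono_set hfint (Filter.Eventually.of_forall fun x => hfnn x)
      (HasSubset.Subset.eventuallyLE hEsub)
  have hvolE : (volume E).toReal
      = Real.sqrt S.det * (r ^ p * (Real.sqrt Real.pi ^ p / Real.Gamma ((p : ℝ) / 2 + 1))) := by
    have hdetinv : (S⁻¹).det = S.det⁻¹ := by
      rw [Matrix.det_nonsing_inv, Ring.inverse_eq_inv]
    rw [hE_def, vol_ellipsoid hA β₀ hr0.le, hdetinv, Real.sqrt_inv, inv_inv]
  have hconst : (2 : ℝ) ^ (-(p : ℝ) / 2) = N⁻¹ * Real.sqrt S.det * Real.sqrt Real.pi ^ p := by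
    have hNsplit : N = Real.sqrt ((2 * Real.pi) ^ p) * Real.sqrt S.det := by
      rw [hN_def, Real.sqrt_mul (by positivity)]
    have h2p : (0:ℝ) < Real.sqrt ((2 * Real.pi) ^ p) := by positivity
    have hdS : (0:ℝ) < Real.sqrt S.det := Real.sqrt_pos.mpr hdetS
    have hx : N⁻¹ * Real.sqrt S.det = (Real.sqrt ((2 * Real.pi) ^ p))⁻¹ := by
      rw [hNsplit]; field_simp
    rw [hx]
    have h1 : (0:ℝ) ≤ (2 : ℝ) ^ (-(p : ℝ) / 2) := Real.rpow_nonneg (by norm_num) _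
    have h2 : (0:ℝ) ≤ (Real.sqrt ((2 * Real.pi) ^ p))⁻¹ * Real.sqrt Real.pi ^ p := by positivity
    have lhs_sq : ((2 : ℝ) ^ (-(p : ℝ) / 2)) ^ 2 = ((2:ℝ) ^ p)⁻¹ := by
      rw [← Real.rpow_natCast ((2:ℝ) ^ (-(p : ℝ) / 2)) 2, ← Real.rpow_mul (by norm_num)]
      norm_num
    have rhs_sq : ((Real.sqrt ((2 * Real.pi) ^ p))⁻¹ * Real.sqrt Real.pi ^ p) ^ 2
        = ((2:ℝ) ^ p)⁻¹ := by
      have ha : (Real.sqrt ((2 * Real.pi) ^ p)) ^ 2 = (2 * Real.pi) ^ p :=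
        Real.sq_sqrt (by positivity)
      have hb : (Real.sqrt Real.pi ^ p) ^ 2 = Real.pi ^ p := by
        rw [← pow_mul, mul_comm p 2, pow_mul, Real.sq_sqrt Real.pi_pos.le]
      rw [mul_pow, inv_pow, ha, hb, mul_pow]
      have hπ : (0:ℝ) < Real.pi ^ p := by positivity
      field_simp
    have : ((2 : ℝ) ^ (-(p : ℝ) / 2)) ^ 2
        = ((Real.sqrt ((2 * Real.pi) ^ p))⁻¹ * Real.sqrt Real.pi ^ p) ^ 2 := by
      rw [lhs_sq, rhs_sq]
    calc (2 : ℝ) ^ (-(p : ℝ) / 2) = Real.sqrt (((2 : ℝ) ^ (-(p : ℝ) / 2)) ^ 2) :=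
          (Real.sqrt_sq h1).symm
      _ = Real.sqrt (((Real.sqrt ((2 * Real.pi) ^ p))⁻¹ * Real.sqrt Real.pi ^ p) ^ 2) := by
          rw [this]
      _ = (Real.sqrt ((2 * Real.pi) ^ p))⁻¹ * Real.sqrt Real.pi ^ p := Real.sqrt_sq h2
  have hΓ : (0:ℝ) < Real.Gamma ((p : ℝ) / 2 + 1) :=
    Real.Gamma_pos_of_pos (by positivity)
  have chain : (N⁻¹ * Real.exp (-(Q d + c ^ 2 / L) / 2)) * (volume E).toReal
      ≤ ∫ x in ballC, f x :=
    le_trans step1 (le_trans (le_of_eq step2) step3)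
  refine le_trans (le_of_eq ?_) chain
  rw [hvolE, hconst]
  have hQd : Q d = d ⬝ᵥ S⁻¹ *ᵥ d := rfl
  rw [hQd]
  ring
end

section
/- Cluster points of EM iterates are fixed points: let Ξ ⊆ ℝ^n be closed, H : Ξ → Ξ continuous, and L, Q continuous with L(ξ) ≥ Q(ξ | v) for all ξ, v, equality iff ξ = v, and suppose H(v) uniquely maximizes Q(· | v). If ξ^{(t+1)} = H(ξ^{(t)}), the sequence {ξ^{(t)}} lies in a compact set, and L(ξ^{(t)}) converges to a limit ℓ, then every cluster point ξ* of {ξ^{(t)}} satisfies H(ξ*) = ξ*. -/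
/-- Cluster points of EM iterates are fixed points: with `Ξ ⊆ ℝⁿ` closed,
`H : Ξ → Ξ` continuous, `L`, `Q` continuous, `L(ξ) ≥ Q(ξ|v)` with equality iff
`ξ = v`, `H v` the unique maximizer of `Q(·|v)`, iterates `ξ^{(t+1)} = H(ξ^{(t)})`
lying in a compact set, and `L(ξ^{(t)}) → ℓ`, every cluster point `ξ*` of the
iterates satisfies `H(ξ*) = ξ*`. -/
theorem em_cluster_points_are_fixed {n : ℕ}
    (S : Set (Fin n → ℝ)) (hScl : IsClosed S)
    (H : (Fin n → ℝ) → (Fin n → ℝ)) (hHmaps : Set.MapsTo H S S)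
    (hHcont : ContinuousOn H S)
    (L : (Fin n → ℝ) → ℝ) (hLcont : ContinuousOn L S)
    (Q : (Fin n → ℝ) → (Fin n → ℝ) → ℝ)
    (hQcont : ContinuousOn (fun pr : (Fin n → ℝ) × (Fin n → ℝ) => Q pr.1 pr.2) (S ×ˢ S))
    (hminor : ∀ ξ ∈ S, ∀ v ∈ S, Q ξ v ≤ L ξ)
    (heq : ∀ ξ ∈ S, ∀ v ∈ S, (Q ξ v = L ξ ↔ ξ = v))
    (hmax : ∀ v ∈ S, ∀ ξ ∈ S, Q ξ v ≤ Q (H v) v ∧ (Q ξ v = Q (H v) v → ξ = H v))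
    (seq : ℕ → Fin n → ℝ) (hseqS : ∀ t, seq t ∈ S)
    (hiter : ∀ t, seq (t + 1) = H (seq t))
    (K : Set (Fin n → ℝ)) (hK : IsCompact K) (hseqK : ∀ t, seq t ∈ K)
    (l : ℝ) (hconv : Filter.Tendsto (fun t => L (seq t)) Filter.atTop (nhds l)) :
    ∀ ξstar : Fin n → ℝ,
      (∃ φ : ℕ → ℕ, StrictMono φ ∧
        Filter.Tendsto (fun j => seq (φ j)) Filter.atTop (nhds ξstar)) →
      H ξstar = ξstar := by
  rintro ξstar ⟨φ, hφ, htend⟩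
  have hξS : ξstar ∈ S :=
    hScl.mem_of_tendsto htend (Filter.Eventually.of_forall fun j => hseqS (φ j))
  have hHξS : H ξstar ∈ S := hHmaps hξS
  -- tendsto within S
  have htendS : Filter.Tendsto (fun j => seq (φ j)) Filter.atTop (nhdsWithin ξstar S) := by
    rw [tendsto_nhdsWithin_iff]
    exact ⟨htend, Filter.Eventually.of_forall fun j => hseqS (φ j)⟩
  -- seq (φ j + 1) → H ξstar
  have htendH : Filter.Tendsto (fun j => seq (φ j + 1)) Filter.atTop (nhds (H ξstar)) := by
    have := (hHcont ξstar hξS).tendsto.comp htendS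
    simpa [Function.comp_def, hiter] using this
  -- L (seq (φ j)) → ℓ and → L ξstar
  have hφtop : Filter.Tendsto φ Filter.atTop Filter.atTop := hφ.tendsto_atTop
  have h1 : Filter.Tendsto (fun j => L (seq (φ j))) Filter.atTop (nhds l) :=
    hconv.comp hφtop
  have h1' : Filter.Tendsto (fun j => L (seq (φ j))) Filter.atTop (nhds (L ξstar)) :=
    (hLcont ξstar hξS).tendsto.comp htendS
  have hLξ : L ξstar = l := tendsto_nhds_unique h1' h1
  -- L (seq (φ j + 1)) → ℓ and → L (H ξstar)
  have h2 : Filter.Tendsto (fun j => L (seq (φ j + 1))) Filter.atTop (nhds l) :=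
    hconv.comp (Filter.tendsto_atTop_mono (fun j => Nat.le_succ (φ j)) hφtop)
  have h2' : Filter.Tendsto (fun j => L (seq (φ j + 1))) Filter.atTop (nhds (L (H ξstar))) := by
    have htendHS : Filter.Tendsto (fun j => seq (φ j + 1)) Filter.atTop
        (nhdsWithin (H ξstar) S) := by
      rw [tendsto_nhdsWithin_iff]
      exact ⟨htendH, Filter.Eventually.of_forall fun j => hseqS (φ j + 1)⟩
    exact (hLcont (H ξstar) hHξS).tendsto.comp htendHS
  have hLH : L (H ξstar) = l := tendsto_nhds_unique h2' h2
  -- key inequalities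
  have hQself : Q ξstar ξstar = L ξstar := ((heq ξstar hξS ξstar hξS).2 rfl)
  have hge : Q ξstar ξstar ≤ Q (H ξstar) ξstar := (hmax ξstar hξS ξstar hξS).1
  have hle : Q (H ξstar) ξstar ≤ L (H ξstar) := hminor (H ξstar) hHξS ξstar hξS
  have hQeq : Q (H ξstar) ξstar = L (H ξstar) := by
    have : L ξstar ≤ Q (H ξstar) ξstar := hQself ▸ hge
    linarith [hLξ, hLH]
  exact (heq (H ξstar) hHξS ξstar hξS).1 hQeq
end
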